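/- Let H be a Hilbert space with orthonormal basis (e_n) and P_α the projection onto the closed span of {e_{2n} + α_n e_{2n+1}} for α ∈ [0,1]^ℕ. If α, β ∈ [0,1]^ℕ and α_n - β_n → 0, then P_α - P_β is a compact operator. -/

import Mathlib

open Filter

section Aux
variable {H : Type*} [NormedAddCommGroup H] [InnerProductSpace ℂ H]

local notation "⟪" x ", " y "⟫" => @inner ℂ _ _ x y

lemma inner_comb (u : ℕ → H) (hu : Orthonormal ℂ u) (a b : ℂ) (m n : ℕ) :
    ⟪u (2*m) + a • u (2*m+1), u (2*n) + b • u (2*n+1)⟫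
      = if m = n then 1 + (starRingEnd ℂ) a * b else 0 := by
  classical
  have hi : ∀ i j : ℕ, ⟪u i, u j⟫ = if i = j then (1:ℂ) else 0 := orthonormal_iff_ite.mp hu
  have h1 : (2*m = 2*n) ↔ m = n := by omega
  have h2 : ¬ (2*m = 2*n+1) := by omega
  have h3 : ¬ (2*m+1 = 2*n) := by omega
  have h4 : (2*m+1 = 2*n+1) ↔ m = n := by omega
  simp only [inner_add_left, inner_add_right, inner_smul_left, inner_smul_right, hi,
    if_neg h2, if_neg h3, h1, h4]
  rcases eq_or_ne m n with rfl | hmn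
  · simp; ring
  · simp [hmn]

lemma inner_comb_block (u : ℕ → H) (hu : Orthonormal ℂ u) (p q p' q' : ℂ) {m n : ℕ} (h : m ≠ n) :
    ⟪p • u (2*m) + q • u (2*m+1), p' • u (2*n) + q' • u (2*n+1)⟫ = 0 := by
  classical
  have hi : ∀ i j : ℕ, ⟪u i, u j⟫ = if i = j then (1:ℂ) else 0 := orthonormal_iff_ite.mp hu
  have h1 : ¬ (2*m = 2*n) := by omega
  have h2 : ¬ (2*m = 2*n+1) := by omega
  have h3 : ¬ (2*m+1 = 2*n) := by omega
  have h4 : ¬ (2*m+1 = 2*n+1) := by omega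
  simp only [inner_add_left, inner_add_right, inner_smul_left, inner_smul_right, hi,
    if_neg h1, if_neg h2, if_neg h3, if_neg h4]
  ring

lemma norm_comb_block (u : ℕ → H) (hu : Orthonormal ℂ u) (p q : ℂ) (n : ℕ) :
    ‖p • u (2*n) + q • u (2*n+1)‖^2 = ‖p‖^2 + ‖q‖^2 := by
  classical
  have hi : ∀ i j : ℕ, ⟪u i, u j⟫ = if i = j then (1:ℂ) else 0 := orthonormal_iff_ite.mp hu
  have h2 : ¬ (2*n = 2*n+1) := by omega
  have h3 : ¬ (2*n+1 = 2*n) := by omega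
  set y := p • u (2*n) + q • u (2*n+1) with hy
  have hself := inner_self_eq_norm_sq (𝕜 := ℂ) y
  have h1 : ⟪y, y⟫ = ((‖p‖^2 + ‖q‖^2 : ℝ) : ℂ) := by
    rw [hy]
    simp only [inner_add_left, inner_add_right, inner_smul_left, inner_smul_right, hi,
      if_neg h2, if_neg h3, eq_self_iff_true, if_true, mul_zero, mul_one, add_zero, zero_add]
    rw [mul_comm p ((starRingEnd ℂ) p), mul_comm q ((starRingEnd ℂ) q),
      RCLike.conj_mul, RCLike.conj_mul]
    norm_cast
  rw [← hself, h1]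
  exact Complex.ofReal_re _

end Aux

/-- The orthogonal projection onto the closed linear span of
`{e (2n) + α n • e (2n+1) : n ∈ ℕ}`, viewed as an operator `H →L[ℂ] H`. -/
noncomputable def Pproj {H : Type*} [NormedAddCommGroup H] [InnerProductSpace ℂ H]
    [CompleteSpace H] (e : HilbertBasis ℕ ℂ H) (α : ℕ → ℝ) : H →L[ℂ] H :=
  let S : Submodule ℂ H :=
    Submodule.span ℂ (Set.range fun n => e (2 * n) + ((α n : ℝ) : ℂ) • e (2 * n + 1))
  haveI : CompleteSpace S.topologicalClosure := S.isClosed_topologicalClosure.completeSpace_coe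
  S.topologicalClosure.subtypeL.comp (S.topologicalClosure.orthogonalProjectionOnto)

section Proj
variable {H : Type*} [NormedAddCommGroup H] [InnerProductSpace ℂ H] [CompleteSpace H]
  (e : HilbertBasis ℕ ℂ H)

local notation "⟪" x ", " y "⟫" => @inner ℂ _ _ x y

/-- the generating vectors -/
noncomputable def vv (α : ℕ → ℝ) (n : ℕ) : H := e (2 * n) + ((α n : ℝ) : ℂ) • e (2 * n + 1)

lemma inner_vv (α β : ℕ → ℝ) (m n : ℕ) :
    ⟪vv e α m, vv e β n⟫ = if m = n then ((1 + α m * β n : ℝ) : ℂ) else 0 := by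
  have h := inner_comb (⇑e) e.orthonormal ((α m : ℝ) : ℂ) ((β n : ℝ) : ℂ) m n
  simp only [vv]
  rw [h]
  split_ifs with hmn
  · push_cast
    rw [Complex.conj_ofReal]
  · rfl

lemma inner_vv_self (α : ℕ → ℝ) (n : ℕ) :
    ⟪vv e α n, vv e α n⟫ = ((1 + α n ^ 2 : ℝ) : ℂ) := by
  rw [inner_vv, if_pos rfl]
  push_cast
  ring

/-- the coefficient of the projection formula -/
noncomputable def cc (α : ℕ → ℝ) (x : H) (n : ℕ) : ℂ :=
  ⟪vv e α n, x⟫ / ((1 + α n ^ 2 : ℝ) : ℂ)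

lemma inner_vv_x (α : ℕ → ℝ) (x : H) (n : ℕ) :
    ⟪vv e α n, x⟫ = ⟪e (2*n), x⟫ + (α n : ℂ) * ⟪e (2*n+1), x⟫ := by
  simp only [vv, inner_add_left, inner_smul_left, Complex.conj_ofReal]

lemma norm_inner_vv_sq_le (α : ℕ → ℝ) (x : H) (n : ℕ) :
    ‖⟪vv e α n, x⟫‖^2 ≤ (1 + α n ^ 2) * (‖⟪e (2*n), x⟫‖^2 + ‖⟪e (2*n+1), x⟫‖^2) := by
  rw [inner_vv_x]
  have h1 : ‖⟪e (2*n), x⟫ + (α n : ℂ) * ⟪e (2*n+1), x⟫‖ ≤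
      ‖⟪e (2*n), x⟫‖ + |α n| * ‖⟪e (2*n+1), x⟫‖ := by
    refine (norm_add_le _ _).trans ?_
    simp [norm_mul, Complex.norm_real, Real.norm_eq_abs]
  have h2 := norm_nonneg (⟪e (2*n), x⟫ + (α n : ℂ) * ⟪e (2*n+1), x⟫)
  have h3 := norm_nonneg (⟪e (2*n), x⟫)
  have h4 := norm_nonneg (⟪e (2*n+1), x⟫)
  have h5 := abs_nonneg (α n)
  have h6 : |α n|^2 = α n ^ 2 := sq_abs _
  nlinarith [sq_nonneg (|α n| * ‖⟪e (2*n), x⟫‖ - ‖⟪e (2*n+1), x⟫‖)]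

lemma summable_sq_coords (x : H) (k : ℕ) :
    Summable (fun n : ℕ => ‖⟪e (2*(n+k)), x⟫‖^2 + ‖⟪e (2*(n+k)+1), x⟫‖^2) := by
  have hb : Summable (fun i : ℕ => ‖⟪e i, x⟫‖^2) := by
    simpa using Orthonormal.inner_products_summable (x := x) e.orthonormal
  have h1 : Summable (fun n : ℕ => ‖⟪e (2*(n+k)), x⟫‖^2) :=
    hb.comp_injective (fun a b hab => by omega)
  have h2 : Summable (fun n : ℕ => ‖⟪e (2*(n+k)+1), x⟫‖^2) :=
    hb.comp_injective (fun a b hab => by omega)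
  exact h1.add h2

lemma summable_blocks (α : ℕ → ℝ) (x : H) :
    Summable (fun n => cc e α x n • vv e α n) := by
  have hpos : ∀ n, (0:ℝ) < 1 + α n ^ 2 := fun n => by positivity
  set s : ℕ → ℝ := fun n => Real.sqrt (1 + α n ^ 2) with hs
  have hspos : ∀ n, 0 < s n := fun n => Real.sqrt_pos.mpr (hpos n)
  have hssq : ∀ n, s n ^ 2 = 1 + α n ^ 2 := fun n => Real.sq_sqrt (hpos n).le
  set u : ℕ → H := fun n => (((s n)⁻¹ : ℝ) : ℂ) • vv e α n with hu
  have huon : Orthonormal ℂ u := by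
    rw [orthonormal_iff_ite]
    intro i j
    simp only [hu, inner_smul_left, inner_smul_right, Complex.conj_ofReal]
    rw [inner_vv]
    rcases eq_or_ne i j with rfl | hij
    · rw [if_pos rfl, if_pos rfl]
      have hr : (s i)⁻¹ * ((s i)⁻¹ * (1 + α i * α i)) = 1 := by
        have h7 : 1 + α i * α i = s i * s i := by
          have := hssq i
          nlinarith [this]
        rw [h7]
        field_simp
        exact div_self (hspos i).ne'
      exact_mod_cast hr
    · simp [hij]
  have hV := huon.orthogonalFamily
  set f : ℕ → ℂ := fun n => cc e α x n * ((s n : ℝ) : ℂ) with hf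
  have heq : ∀ n, (LinearIsometry.toSpanSingleton ℂ H (huon.1 n)) (f n)
      = cc e α x n • vv e α n := by
    intro n
    have hsne : ((s n : ℝ) : ℂ) ≠ 0 := by
      exact_mod_cast (hspos n).ne'
    simp only [LinearIsometry.toSpanSingleton_apply, hf, hu, smul_smul]
    congr 1
    field_simp
    rw [Complex.ofReal_div, Complex.ofReal_one, mul_assoc, mul_one_div_cancel hsne, mul_one]
  have : Summable (fun n => (LinearIsometry.toSpanSingleton ℂ H (huon.1 n)) (f n)) := by
    rw [hV.summable_iff_norm_sq_summable]
    have hle : ∀ n, ‖f n‖^2 ≤ ‖⟪e (2*n), x⟫‖^2 + ‖⟪e (2*n+1), x⟫‖^2 := by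
      intro n
      have h1 : ‖f n‖^2 = ‖⟪vv e α n, x⟫‖^2 / (1 + α n ^ 2) := by
        simp only [hf, cc, norm_mul, norm_div]
        rw [Complex.norm_real, Complex.norm_real, Real.norm_eq_abs, Real.norm_eq_abs,
          abs_of_pos (hpos n), abs_of_pos (hspos n)]
        rw [mul_pow, div_pow, hssq n]
        field_simp
      rw [h1, div_le_iff₀ (hpos n)]
      have := norm_inner_vv_sq_le e α x n
      nlinarith [hpos n]
    refine Summable.of_nonneg_of_le (fun n => sq_nonneg _) hle ?_
    simpa using summable_sq_coords e x 0
  exact this.congr heq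

lemma cc_mul_den (α : ℕ → ℝ) (x : H) (n : ℕ) :
    cc e α x n * ((1 + α n ^ 2 : ℝ) : ℂ) = ⟪vv e α n, x⟫ := by
  have hne : ((1 + α n ^ 2 : ℝ) : ℂ) ≠ 0 := by
    exact_mod_cast (show (0:ℝ) < 1 + α n ^ 2 by positivity).ne'
  rw [cc, div_mul_cancel₀ _ hne]

lemma Pproj_eq_tsum (α : ℕ → ℝ) (x : H) :
    Pproj e α x = ∑' n, cc e α x n • vv e α n := by
  classical
  set S : Submodule ℂ H :=
    Submodule.span ℂ (Set.range fun n => e (2 * n) + ((α n : ℝ) : ℂ) • e (2 * n + 1)) with hS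
  haveI : CompleteSpace S.topologicalClosure := S.isClosed_topologicalClosure.completeSpace_coe
  have hPdef : Pproj e α x = (S.topologicalClosure.starProjection x) := rfl
  set y := ∑' n, cc e α x n • vv e α n with hy
  have hsm := summable_blocks e α x
  have hvS : ∀ n, vv e α n ∈ S := fun n => Submodule.subset_span ⟨n, rfl⟩
  rw [hPdef]
  apply Submodule.eq_starProjection_of_mem_orthogonal
  · have htend := hsm.hasSum.tendsto_sum_nat
    have hmem : ∀ N : ℕ, ∑ n ∈ Finset.range N, cc e α x n • vv e α n ∈ (S : Set H) :=
      fun N => Submodule.sum_mem S (fun n _ => Submodule.smul_mem S _ (hvS n))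
    have hcl : y ∈ closure (S : Set H) :=
      mem_closure_of_tendsto htend (Filter.Eventually.of_forall hmem)
    rwa [← Submodule.topologicalClosure_coe, SetLike.mem_coe] at hcl
  · have horth : (S.topologicalClosure)ᗮ = Sᗮ := by
      rw [← Submodule.orthogonal_orthogonal_eq_closure, Submodule.triorthogonal_eq_orthogonal]
    rw [horth, Submodule.mem_orthogonal]
    intro w hw
    refine Submodule.span_induction ?_ ?_ ?_ ?_ hw
    · rintro w ⟨m, rfl⟩
      show ⟪vv e α m, x - y⟫ = 0
      have hterm : ∀ n, ⟪vv e α m, cc e α x n • vv e α n⟫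
          = if n = m then ⟪vv e α m, x⟫ else 0 := by
        intro n
        rw [inner_smul_right, inner_vv]
        rcases eq_or_ne n m with rfl | hnm
        · rw [if_pos rfl, if_pos rfl]
          have : ((1 + α n * α n : ℝ) : ℂ) = ((1 + α n ^ 2 : ℝ) : ℂ) := by push_cast; ring
          rw [this, cc_mul_den]
        · rw [if_neg (Ne.symm hnm), if_neg hnm, mul_zero]
      have hkey : ⟪vv e α m, y⟫ = ⟪vv e α m, x⟫ := by
        have hmap : (innerSL ℂ (vv e α m)) y
            = ∑' n, (innerSL ℂ (vv e α m)) (cc e α x n • vv e α n) :=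
          ContinuousLinearMap.map_tsum _ hsm
        simp only [innerSL_apply_apply] at hmap
        rw [hmap]
        calc (∑' n, ⟪vv e α m, cc e α x n • vv e α n⟫)
            = ∑' n, if n = m then ⟪vv e α m, x⟫ else 0 := tsum_congr hterm
          _ = ⟪vv e α m, x⟫ := tsum_ite_eq m _
      rw [inner_sub_right, hkey, sub_self]
    · simp
    · intro a b _ _ ha hb
      rw [inner_add_left, ha, hb, add_zero]
    · intro c a _ ha
      rw [inner_smul_left, ha, mul_zero]

lemma hasSum_Pproj (α : ℕ → ℝ) (x : H) :
    HasSum (fun n => cc e α x n • vv e α n) (Pproj e α x) := by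
  rw [Pproj_eq_tsum]
  exact (summable_blocks e α x).hasSum

lemma norm_sq_le_of_hasSum_orth {g : ℕ → H} {s0 : H} {u : ℕ → ℝ}
    (hg : HasSum g s0) (horth : ∀ i j, i ≠ j → ⟪g i, g j⟫ = 0)
    (hu : ∀ i, ‖g i‖^2 ≤ u i) (hsum : Summable u) :
    ‖s0‖^2 ≤ ∑' i, u i := by
  classical
  have hnn : ∀ i, 0 ≤ u i := fun i => le_trans (sq_nonneg _) (hu i)
  have hfin : ∀ t : Finset ℕ, ‖∑ i ∈ t, g i‖^2 ≤ ∑' i, u i := by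
    intro t
    have hpyth : ⟪∑ i ∈ t, g i, ∑ j ∈ t, g j⟫ = ∑ i ∈ t, ((‖g i‖ : ℂ))^2 := by
      rw [sum_inner]
      refine Finset.sum_congr rfl fun i hi => ?_
      rw [inner_sum, Finset.sum_eq_single_of_mem i hi
        (fun j hj hji => horth i j (Ne.symm hji))]
      exact inner_self_eq_norm_sq_to_K _
    have heq : ‖∑ i ∈ t, g i‖^2 = ∑ i ∈ t, ‖g i‖^2 := by
      have h2 := inner_self_eq_norm_sq (𝕜 := ℂ) (∑ i ∈ t, g i)
      rw [← h2, hpyth]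
      rw [map_sum]
      refine Finset.sum_congr rfl fun i _ => ?_
      norm_cast
    rw [heq]
    calc ∑ i ∈ t, ‖g i‖^2 ≤ ∑ i ∈ t, u i := Finset.sum_le_sum fun i _ => hu i
      _ ≤ ∑' i, u i := Summable.sum_le_tsum t (fun i _ => hnn i) hsum
  have hn : Tendsto (fun N => ‖∑ i ∈ Finset.range N, g i‖^2) atTop (nhds (‖s0‖^2)) :=
    (hg.tendsto_sum_nat.norm).pow 2
  exact le_of_tendsto hn (Filter.Eventually.of_forall fun N => hfin _)

lemma lipAux {num t s : ℝ} (hnum : |num| ≤ 2*|t-s|) :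
    |num / ((1+t^2)*(1+s^2))| ≤ 2*|t-s| := by
  have hD : (0:ℝ) < (1+t^2)*(1+s^2) := by positivity
  rw [abs_div, abs_of_pos hD, div_le_iff₀ hD]
  have hp : 1 ≤ (1+t^2)*(1+s^2) := by nlinarith [sq_nonneg t, sq_nonneg s]
  nlinarith [abs_nonneg (t-s), abs_nonneg num,
    mul_le_mul_of_nonneg_left hp (by positivity : (0:ℝ) ≤ 2*|t-s|)]

lemma lip1 {t s : ℝ} (ht : t ∈ Set.Icc (0:ℝ) 1) (hs : s ∈ Set.Icc (0:ℝ) 1) :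
    |(1+t^2)⁻¹ - (1+s^2)⁻¹| ≤ 2*|t-s| := by
  obtain ⟨ht0, ht1⟩ := ht; obtain ⟨hs0, hs1⟩ := hs
  have h1 : (0:ℝ) < 1+t^2 := by positivity
  have h2 : (0:ℝ) < 1+s^2 := by positivity
  have e1 : (1+t^2)⁻¹ - (1+s^2)⁻¹ = (s^2 - t^2)/((1+t^2)*(1+s^2)) := by
    field_simp
    ring
  rw [e1]
  apply lipAux
  rw [show s^2 - t^2 = (s+t)*(s-t) by ring, abs_mul, abs_sub_comm s t]
  have hst : |s+t| ≤ 2 := abs_le.mpr ⟨by linarith, by linarith⟩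
  exact mul_le_mul_of_nonneg_right hst (abs_nonneg _)

lemma lip2 {t s : ℝ} (ht : t ∈ Set.Icc (0:ℝ) 1) (hs : s ∈ Set.Icc (0:ℝ) 1) :
    |t/(1+t^2) - s/(1+s^2)| ≤ 2*|t-s| := by
  obtain ⟨ht0, ht1⟩ := ht; obtain ⟨hs0, hs1⟩ := hs
  have h1 : (0:ℝ) < 1+t^2 := by positivity
  have h2 : (0:ℝ) < 1+s^2 := by positivity
  have e1 : t/(1+t^2) - s/(1+s^2) = ((t-s)*(1-t*s))/((1+t^2)*(1+s^2)) := by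
    field_simp
    ring
  rw [e1]
  apply lipAux
  rw [abs_mul]
  have hts : |1 - t*s| ≤ 1 := abs_le.mpr ⟨by nlinarith, by nlinarith⟩
  calc |t-s| * |1-t*s| ≤ |t-s| * 1 := mul_le_mul_of_nonneg_left hts (abs_nonneg _)
    _ ≤ 2*|t-s| := by nlinarith [abs_nonneg (t-s)]

lemma lip3 {t s : ℝ} (ht : t ∈ Set.Icc (0:ℝ) 1) (hs : s ∈ Set.Icc (0:ℝ) 1) :
    |t^2/(1+t^2) - s^2/(1+s^2)| ≤ 2*|t-s| := by
  obtain ⟨ht0, ht1⟩ := ht; obtain ⟨hs0, hs1⟩ := hs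
  have h1 : (0:ℝ) < 1+t^2 := by positivity
  have h2 : (0:ℝ) < 1+s^2 := by positivity
  have e1 : t^2/(1+t^2) - s^2/(1+s^2) = (t^2 - s^2)/((1+t^2)*(1+s^2)) := by
    field_simp
    ring
  rw [e1]
  apply lipAux
  rw [show t^2 - s^2 = (t+s)*(t-s) by ring, abs_mul]
  have hst : |t+s| ≤ 2 := abs_le.mpr ⟨by linarith, by linarith⟩
  exact mul_le_mul_of_nonneg_right hst (abs_nonneg _)

lemma comb_bound {r1 r2 d : ℝ} (h1 : |r1| ≤ 2*d) (h2 : |r2| ≤ 2*d) (hd : 0 ≤ d) (a b : ℂ) :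
    ‖(r1:ℂ)*a + (r2:ℂ)*b‖^2 ≤ 8*d^2*(‖a‖^2+‖b‖^2) := by
  have hn : ‖(r1:ℂ)*a + (r2:ℂ)*b‖ ≤ 2*d*‖a‖ + 2*d*‖b‖ := by
    refine (norm_add_le _ _).trans ?_
    have e1 : ‖(r1:ℂ)*a‖ = |r1| * ‖a‖ := by rw [norm_mul, Complex.norm_real, Real.norm_eq_abs]
    have e2 : ‖(r2:ℂ)*b‖ = |r2| * ‖b‖ := by rw [norm_mul, Complex.norm_real, Real.norm_eq_abs]
    rw [e1, e2]
    exact add_le_add (mul_le_mul_of_nonneg_right h1 (norm_nonneg a))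
      (mul_le_mul_of_nonneg_right h2 (norm_nonneg b))
  have h0 := norm_nonneg ((r1:ℂ)*a + (r2:ℂ)*b)
  have hsq := mul_self_le_mul_self h0 hn
  nlinarith [hsq, mul_nonneg (mul_nonneg hd hd) (sq_nonneg (‖a‖ - ‖b‖)),
    norm_nonneg a, norm_nonneg b]

lemma isCompact_rankOne (g : H →L[ℂ] ℂ) (y : H) :
    IsCompactOperator ⇑(g.smulRight y) := by
  refine ⟨(fun z : ℂ => z • y) '' Metric.closedBall 0 ‖g‖, ?_, ?_⟩
  · exact (isCompact_closedBall (0:ℂ) ‖g‖).image (continuous_id.smul continuous_const)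
  · refine Filter.mem_of_superset (Metric.closedBall_mem_nhds (0:H) one_pos) ?_
    intro x hx
    rw [Metric.mem_closedBall, dist_zero_right] at hx
    refine ⟨g x, ?_, rfl⟩
    rw [Metric.mem_closedBall, dist_zero_right]
    calc ‖g x‖ ≤ ‖g‖ * ‖x‖ := g.le_opNorm x
      _ ≤ ‖g‖ * 1 := mul_le_mul_of_nonneg_left hx (norm_nonneg g)
      _ = ‖g‖ := mul_one _

lemma PP_formula (α β : ℕ → ℝ) (x : H) (n : ℕ) :
    cc e α x n - cc e β x n
      = ((((1+α n^2)⁻¹ - (1+β n^2)⁻¹ : ℝ)) : ℂ) * ⟪e (2*n), x⟫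
        + (((α n/(1+α n^2) - β n/(1+β n^2) : ℝ)) : ℂ) * ⟪e (2*n+1), x⟫ := by
  have hda : (1 + (α n : ℂ)^2) ≠ 0 := by
    have h := (show (0:ℝ) < 1 + α n^2 by positivity).ne'
    exact_mod_cast h
  have hdb : (1 + (β n : ℂ)^2) ≠ 0 := by
    have h := (show (0:ℝ) < 1 + β n^2 by positivity).ne'
    exact_mod_cast h
  rw [cc, cc, inner_vv_x, inner_vv_x]
  push_cast
  field_simp
  ring

lemma QQ_formula (α β : ℕ → ℝ) (x : H) (n : ℕ) :
    (α n : ℂ) * cc e α x n - (β n : ℂ) * cc e β x n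
      = (((α n/(1+α n^2) - β n/(1+β n^2) : ℝ)) : ℂ) * ⟪e (2*n), x⟫
        + (((α n^2/(1+α n^2) - β n^2/(1+β n^2) : ℝ)) : ℂ) * ⟪e (2*n+1), x⟫ := by
  have hda : (1 + (α n : ℂ)^2) ≠ 0 := by
    have h := (show (0:ℝ) < 1 + α n^2 by positivity).ne'
    exact_mod_cast h
  have hdb : (1 + (β n : ℂ)^2) ≠ 0 := by
    have h := (show (0:ℝ) < 1 + β n^2 by positivity).ne'
    exact_mod_cast h
  rw [cc, cc, inner_vv_x, inner_vv_x]
  push_cast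
  field_simp
  ring

end Proj

section Main
variable {H : Type*} [NormedAddCommGroup H] [InnerProductSpace ℂ H] [CompleteSpace H]

local notation "⟪" x ", " y "⟫" => @inner ℂ _ _ x y

theorem stmt_18_aux (e : HilbertBasis ℕ ℂ H)
    (α β : ℕ → ℝ) (hα : ∀ n, α n ∈ Set.Icc (0:ℝ) 1) (hβ : ∀ n, β n ∈ Set.Icc (0:ℝ) 1)
    (h : Tendsto (fun n => α n - β n) atTop (nhds 0)) :
    IsCompactOperator (Pproj e α - Pproj e β) := by
  classical
  set B : ℕ → H →L[ℂ] H := fun n =>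
    ((((1 + α n ^ 2)⁻¹ : ℝ)) : ℂ) • (innerSL ℂ (vv e α n)).smulRight (vv e α n)
      - ((((1 + β n ^ 2)⁻¹ : ℝ)) : ℂ) • (innerSL ℂ (vv e β n)).smulRight (vv e β n) with hB
  have hBapply : ∀ (x : H) n, B n x = cc e α x n • vv e α n - cc e β x n • vv e β n := by
    intro x n
    simp only [hB, ContinuousLinearMap.sub_apply, ContinuousLinearMap.smul_apply,
      ContinuousLinearMap.smulRight_apply, innerSL_apply_apply, smul_smul]
    congr 1
    · congr 1
      rw [cc]
      push_cast
      ring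
    · congr 1
      rw [cc]
      push_cast
      ring
  have hcoord : ∀ (x : H) n, B n x
      = (cc e α x n - cc e β x n) • e (2*n)
        + ((α n : ℂ) * cc e α x n - (β n : ℂ) * cc e β x n) • e (2*n+1) := by
    intro x n
    rw [hBapply]
    simp only [vv]
    module
  have hBnorm : ∀ (x : H) n, ‖B n x‖^2
      ≤ 16*(α n - β n)^2 * (‖⟪e (2*n), x⟫‖^2 + ‖⟪e (2*n+1), x⟫‖^2) := by
    intro x n
    rw [hcoord, norm_comb_block (⇑e) e.orthonormal]
    rw [PP_formula, QQ_formula]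
    have hd0 : (0:ℝ) ≤ |α n - β n| := abs_nonneg _
    have h1 := lip1 (hα n) (hβ n)
    have h2 := lip2 (hα n) (hβ n)
    have h3 := lip3 (hα n) (hβ n)
    have hp := comb_bound h1 h2 hd0 (⟪e (2*n), x⟫) (⟪e (2*n+1), x⟫)
    have hq := comb_bound h2 h3 hd0 (⟪e (2*n), x⟫) (⟪e (2*n+1), x⟫)
    have hd2 : |α n - β n|^2 = (α n - β n)^2 := sq_abs _
    rw [hd2] at hp hq
    linarith [hp, hq]
  have hBorth : ∀ (x : H) (m n : ℕ), m ≠ n → ⟪B m x, B n x⟫ = 0 := by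
    intro x m n hmn
    rw [hcoord, hcoord]
    exact inner_comb_block (⇑e) e.orthonormal _ _ _ _ hmn
  set D := Pproj e α - Pproj e β with hD
  have hDsum : ∀ x : H, HasSum (fun n => B n x) (D x) := by
    intro x
    have h12 := (hasSum_Pproj e α x).sub (hasSum_Pproj e β x)
    have hfn : (fun n => cc e α x n • vv e α n - cc e β x n • vv e β n) = fun n => B n x :=
      funext fun n => (hBapply x n).symm
    rw [hfn] at h12
    simpa only [hD, ContinuousLinearMap.sub_apply] using h12
  set F : ℕ → H →L[ℂ] H := fun N => ∑ n ∈ Finset.range N, B n with hF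
  have hFcompact : ∀ N, IsCompactOperator ⇑(F N) := by
    intro N
    induction N with
    | zero =>
      have : F 0 = 0 := by rw [hF]; simp
      rw [this]
      exact isCompactOperator_zero
    | succ n ih =>
      have hstep : F (n+1) = F n + B n := by rw [hF]; exact Finset.sum_range_succ _ _
      rw [hstep]
      have hBc : IsCompactOperator ⇑(B n) := by
        rw [hB]
        have hc1 : IsCompactOperator
            ⇑(((((1 + α n ^ 2)⁻¹ : ℝ)) : ℂ) • (innerSL ℂ (vv e α n)).smulRight (vv e α n)) :=
          (isCompact_rankOne (innerSL ℂ (vv e α n)) (vv e α n)).smul _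
        have hc2 : IsCompactOperator
            ⇑(((((1 + β n ^ 2)⁻¹ : ℝ)) : ℂ) • (innerSL ℂ (vv e β n)).smulRight (vv e β n)) :=
          (isCompact_rankOne (innerSL ℂ (vv e β n)) (vv e β n)).smul _
        exact hc1.sub hc2
      exact ih.add hBc
  suffices hcl : D ∈ closure {T : H →L[ℂ] H | IsCompactOperator ⇑T} by
    have := isClosed_setOf_isCompactOperator.closure_subset hcl
    exact this
  rw [Metric.mem_closure_iff]
  intro ε hε
  have h5 : (0:ℝ) < ε/5 := by linarith
  obtain ⟨N, hN⟩ := (Metric.tendsto_atTop.mp h) (ε/5) h5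
  refine ⟨F N, hFcompact N, ?_⟩
  rw [dist_eq_norm]
  have hop : ‖D - F N‖ ≤ 4*(ε/5) := by
    apply ContinuousLinearMap.opNorm_le_bound _ (by positivity)
    intro x
    have htail : HasSum (fun i => B (i+N) x) ((D - F N) x) := by
      have hFx : ∑ i ∈ Finset.range N, B i x = F N x := by
        rw [hF]
        simp [ContinuousLinearMap.sum_apply]
      refine (hasSum_nat_add_iff (f := fun n => B n x) N).mpr ?_
      rw [ContinuousLinearMap.sub_apply, hFx, sub_add_cancel]
      exact hDsum x
    set u : ℕ → ℝ := fun i =>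
      16*(ε/5)^2 * (‖⟪e (2*(i+N)), x⟫‖^2 + ‖⟪e (2*(i+N)+1), x⟫‖^2) with hu
    have hbd : ∀ i : ℕ, ‖B (i+N) x‖^2 ≤ u i := by
      intro i
      refine (hBnorm x (i+N)).trans ?_
      have hN' := hN (i+N) (by omega)
      rw [Real.dist_eq, sub_zero] at hN'
      have h6 : (α (i+N) - β (i+N))^2 ≤ (ε/5)^2 := by
        have := abs_nonneg (α (i+N) - β (i+N))
        nlinarith [sq_abs (α (i+N) - β (i+N))]
      have hs0 : (0:ℝ) ≤ ‖⟪e (2*(i+N)), x⟫‖^2 + ‖⟪e (2*(i+N)+1), x⟫‖^2 := by positivity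
      rw [hu]
      nlinarith [h6, hs0]
    have hsumu : Summable u := by
      rw [hu]
      exact (summable_sq_coords e x N).mul_left _
    have hpy := norm_sq_le_of_hasSum_orth htail
      (fun i j hij => hBorth x _ _ (by omega)) hbd hsumu
    have hcoordsum : (∑' i, (‖⟪e (2*(i+N)), x⟫‖^2 + ‖⟪e (2*(i+N)+1), x⟫‖^2)) ≤ ‖x‖^2 := by
      have hb : Summable (fun k : ℕ => ‖⟪e k, x⟫‖^2) := by
        simpa using Orthonormal.inner_products_summable (x := x) e.orthonormal
      have hbe : ∀ k, 0 ≤ ‖⟪e k, x⟫‖^2 := fun k => sq_nonneg _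
      have hkey : ∀ t : Finset ℕ,
          ∑ i ∈ t, (‖⟪e (2*(i+N)), x⟫‖^2 + ‖⟪e (2*(i+N)+1), x⟫‖^2) ≤ ∑' k, ‖⟪e k, x⟫‖^2 := by
        intro t
        have hinj1 : Set.InjOn (fun i => 2*(i+N)) t := fun a _ b _ hab => by
          change 2*(a+N) = 2*(b+N) at hab
          omega
        have hinj2 : Set.InjOn (fun i => 2*(i+N)+1) t := fun a _ b _ hab => by
          change 2*(a+N)+1 = 2*(b+N)+1 at hab
          omega
        have hdisj : Disjoint (t.image (fun i => 2*(i+N))) (t.image (fun i => 2*(i+N)+1)) := by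
          rw [Finset.disjoint_left]
          intro k hk1 hk2
          simp only [Finset.mem_image] at hk1 hk2
          obtain ⟨a, -, ha⟩ := hk1
          obtain ⟨b, -, hb2⟩ := hk2
          change 2*(a+N) = k at ha
          change 2*(b+N)+1 = k at hb2
          omega
        rw [Finset.sum_add_distrib]
        have e1 : ∑ k ∈ t.image (fun i => 2*(i+N)), ‖⟪e k, x⟫‖^2
            = ∑ i ∈ t, ‖⟪e (2*(i+N)), x⟫‖^2 :=
          Finset.sum_image (fun a ha b hb hab => hinj1 ha hb hab)
        have e2 : ∑ k ∈ t.image (fun i => 2*(i+N)+1), ‖⟪e k, x⟫‖^2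
            = ∑ i ∈ t, ‖⟪e (2*(i+N)+1), x⟫‖^2 :=
          Finset.sum_image (fun a ha b hb hab => hinj2 ha hb hab)
        rw [← e1, ← e2, ← Finset.sum_union hdisj]
        exact Summable.sum_le_tsum _ (fun k _ => hbe k) hb
      have hs2 : Summable (fun i : ℕ => ‖⟪e (2*(i+N)), x⟫‖^2 + ‖⟪e (2*(i+N)+1), x⟫‖^2) :=
        summable_sq_coords e x N
      refine le_trans (Summable.tsum_le_of_sum_le hs2 hkey) ?_
      exact Orthonormal.tsum_inner_products_le x e.orthonormal
    have htot : ‖(D - F N) x‖^2 ≤ (4*(ε/5))^2 * ‖x‖^2 := by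
      have ht1 : (∑' i, u i) ≤ 16*(ε/5)^2 * ‖x‖^2 := by
        rw [hu, tsum_mul_left]
        have := mul_le_mul_of_nonneg_left hcoordsum (by positivity : (0:ℝ) ≤ 16*(ε/5)^2)
        linarith
      calc ‖(D - F N) x‖^2 ≤ ∑' i, u i := hpy
        _ ≤ 16*(ε/5)^2 * ‖x‖^2 := ht1
        _ = (4*(ε/5))^2 * ‖x‖^2 := by ring
    have hfin : ‖(D - F N) x‖ ≤ 4*(ε/5) * ‖x‖ := by
      have h7 : (0:ℝ) ≤ 4*(ε/5) * ‖x‖ := by positivity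
      nlinarith [norm_nonneg ((D - F N) x), htot]
    exact hfin
  have : (4:ℝ)*(ε/5) < ε := by linarith
  calc ‖D - F N‖ ≤ 4*(ε/5) := hop
    _ < ε := this

end Main

open Filter

theorem stmt_18 {H : Type*} [NormedAddCommGroup H] [InnerProductSpace ℂ H]
    [CompleteSpace H] (e : HilbertBasis ℕ ℂ H)
    (α β : ℕ → ℝ) (hα : ∀ n, α n ∈ Set.Icc (0:ℝ) 1) (hβ : ∀ n, β n ∈ Set.Icc (0:ℝ) 1)
    (h : Tendsto (fun n => α n - β n) atTop (nhds 0)) :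
    IsCompactOperator (Pproj e α - Pproj e β) := by
  exact stmt_18_aux e α β hα hβ h
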